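/- If {φ_k} is a sequence of positive real-valued C∞ functions on ∂Ω with φ_k → φ uniformly on ∂Ω as k → ∞, then S_{φ_k}(z,w) → S_φ(z,w) locally uniformly on Ω × Ω. -/

import Mathlib

open MeasureTheory Filter Topology Complex Set

noncomputable section

/-- A bounded `n`-connected planar domain `Ω` with `C^∞`-smooth boundary consisting of the
`n` closed curves `γ i`, together with the induced arc length measure `μ` on `∂Ω` and the
complex unit tangent function `T` (so that `dz = T ds`). -/
structure SmoothDomain (n : ℕ) where
  Ω : Set ℂ
  isOpen : IsOpen Ω
  bounded : Bornology.IsBounded Ω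
  connected : IsConnected Ω
  γ : Fin n → ℝ → ℂ
  γ_smooth : ∀ i, ContDiff ℝ (⊤ : ℕ∞) (γ i)
  γ_periodic : ∀ i, Function.Periodic (γ i) 1
  γ_regular : ∀ i t, deriv (γ i) t ≠ 0
  γ_inj : ∀ i, Set.InjOn (γ i) (Set.Ico (0 : ℝ) 1)
  γ_disjoint : ∀ i j, i ≠ j → Disjoint (Set.range (γ i)) (Set.range (γ j))
  γ_cover : frontier Ω = ⋃ i, Set.range (γ i)
  μ : Measure ℂ
  μ_def : μ = ∑ i, Measure.map (γ i)
      ((volume.restrict (Set.Ico (0 : ℝ) 1)).withDensity fun t => ENNReal.ofReal ‖deriv (γ i) t‖)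
  T : ℂ → ℂ
  T_def : ∀ i t, T (γ i t) = deriv (γ i) t / (‖deriv (γ i) t‖ : ℂ)

namespace SmoothDomain

variable {n : ℕ} (D : SmoothDomain n)

/-- `C^∞(∂Ω)`: functions admitting a `C^∞` extension. -/
def SmoothOnBdry (u : ℂ → ℂ) : Prop :=
  ∃ U : ℂ → ℂ, ContDiff ℝ (⊤ : ℕ∞) U ∧ Set.EqOn u U (frontier D.Ω)

/-- positive real-valued `C^∞` weights on `∂Ω`. -/
def SmoothWeight (φ : ℂ → ℝ) : Prop :=
  (∀ z ∈ frontier D.Ω, 0 < φ z) ∧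
  ∃ Φ : ℂ → ℝ, ContDiff ℝ (⊤ : ℕ∞) Φ ∧ Set.EqOn φ Φ (frontier D.Ω)

/-- `A^∞(Ω)`: holomorphic on `Ω` and `C^∞` up to the boundary. -/
def AInf (f : ℂ → ℂ) : Prop :=
  DifferentiableOn ℂ f D.Ω ∧
  ∃ F : ℂ → ℂ, ContDiff ℝ (⊤ : ℕ∞) F ∧ Set.EqOn f F (closure D.Ω)

/-- the inner product of `L²_φ(∂Ω)`. -/
def ip (φ : ℂ → ℝ) (u v : ℂ → ℂ) : ℂ :=
  ∫ z, u z * (starRingEnd ℂ) (v z) * (φ z : ℂ) ∂D.μ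

/-- the Cauchy transform, written against arc length measure using `dz = T ds`. -/
def cauchy (u : ℂ → ℂ) (z : ℂ) : ℂ :=
  (2 * (Real.pi : ℂ) * Complex.I)⁻¹ * ∫ ζ, u ζ * D.T ζ / (ζ - z) ∂D.μ

/-- the Cauchy kernel `C_a`. -/
def ck (a z : ℂ) : ℂ :=
  (starRingEnd ℂ) ((2 * (Real.pi : ℂ) * Complex.I)⁻¹ * D.T z / (z - a))

/-- The Hardy space `H²(∂Ω)`: the `L²(∂Ω)`-closure of `A^∞(Ω)`, whose elements are
identified with holomorphic functions on `Ω` recovered by the Cauchy transform. -/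
def Hardy (u : ℂ → ℂ) : Prop :=
  MemLp u 2 D.μ ∧ DifferentiableOn ℂ u D.Ω ∧
  (∀ a ∈ D.Ω, u a = D.cauchy u a) ∧
  ∃ f : ℕ → ℂ → ℂ, (∀ k, D.AInf (f k)) ∧
    Tendsto (fun k => ∫ z, ‖f k z - u z‖ ^ 2 ∂D.μ) atTop (nhds 0)

/-- `P` is the weighted Szegő projection: the orthogonal projection of `L²_φ(∂Ω)`
onto `H²(∂Ω)`. -/
def IsSzegoProj (φ : ℂ → ℝ) (P : (ℂ → ℂ) → ℂ → ℂ) : Prop :=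
  ∀ u : ℂ → ℂ, MemLp u 2 D.μ →
    D.Hardy (P u) ∧ ∀ h : ℂ → ℂ, D.Hardy h → D.ip φ (fun z => u z - P u z) h = 0

/-- `S` is the weighted Szegő kernel of weight `φ`: `S(·,a)` is the reproducing element
of `H²(∂Ω)` for evaluation at `a` with respect to `⟨·,·⟩_φ`. -/
def IsSzegoKernel (φ : ℂ → ℝ) (S : ℂ → ℂ → ℂ) : Prop :=
  ∀ a ∈ D.Ω, D.Hardy (fun z => S z a) ∧
    ∀ h : ℂ → ℂ, D.Hardy h → h a = D.ip φ h (fun z => S z a)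

/-- the Cauchy transform as an operator `C^∞(∂Ω) → A^∞(Ω)`, recording also the
boundary values of `Cu` (the values of the `A^∞` extension). -/
def IsCauchyOp (C : (ℂ → ℂ) → ℂ → ℂ) : Prop :=
  ∀ u, D.SmoothOnBdry u → D.AInf (C u) ∧ ∀ z ∈ D.Ω, C u z = D.cauchy u z

/-- the `L²_φ`-adjoint `C^*_φ v = v - T̄ φ⁻¹ conj (C (conj (v φ) T̄))`. -/
def cstar (φ : ℂ → ℝ) (C : (ℂ → ℂ) → ℂ → ℂ) (v : ℂ → ℂ) (z : ℂ) : ℂ :=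
  v z - (starRingEnd ℂ) (D.T z) * ((φ z : ℂ))⁻¹ *
    (starRingEnd ℂ) (C (fun ξ => (starRingEnd ℂ) (v ξ * (φ ξ : ℂ)) * (starRingEnd ℂ) (D.T ξ)) z)

/-- weighted Garabedian data: `H a = H_a ∈ A^∞(Ω)` is the function appearing in the
orthogonal decomposition `φ⁻¹ C_a = S_φ(·,a) + φ⁻¹ conj (H_a T)` on `∂Ω`; the weighted
Garabedian kernel is then `L_φ(z,a) = 1/(2π(z-a)) - i H_a(z)`. -/
def IsGarabedian (φ : ℂ → ℝ) (S : ℂ → ℂ → ℂ) (H : ℂ → ℂ → ℂ) : Prop :=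
  ∀ a ∈ D.Ω, D.AInf (H a) ∧ ∀ z ∈ frontier D.Ω,
    ((φ z : ℂ))⁻¹ * D.ck a z = S z a + ((φ z : ℂ))⁻¹ * (starRingEnd ℂ) (H a z * D.T z)

/-- the `C^s` norm `‖u‖_s` on the boundary with respect to the parametrization. -/
def bnorm (s : ℕ) (u : ℂ → ℂ) : ℝ :=
  ⨆ i : Fin n, ⨆ m : Fin (s + 1), ⨆ t : ℝ,
    ‖iteratedDeriv (m : ℕ) (fun τ => u (D.γ i τ)) t‖

/-- membership in `C^s(∂Ω)`. -/
def MemC (s : ℕ) (u : ℂ → ℂ) : Prop :=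
  ∀ i, ContDiff ℝ (s : ℕ∞) fun t => u (D.γ i t)

/-- convergence in the `C^∞` topology on `∂Ω`: uniform convergence of all derivatives
along the boundary parametrization. -/
def TendstoCinf (φk : ℕ → ℂ → ℝ) (φ : ℂ → ℝ) : Prop :=
  ∀ i : Fin n, ∀ m : ℕ,
    TendstoUniformly (fun k => iteratedDeriv m fun t => φk k (D.γ i t))
      (iteratedDeriv m fun t => φ (D.γ i t)) atTop

/-- the boundary diagonal `Δ = {(z,z) : z ∈ ∂Ω}`. -/
def bdryDiag : Set (ℂ × ℂ) := {p : ℂ × ℂ | p.1 = p.2 ∧ p.1 ∈ frontier D.Ω}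

end SmoothDomain

/-- the Wirtinger derivative `∂/∂z`. -/
def wdz (u : ℂ → ℂ) (z : ℂ) : ℂ :=
  (1 / 2) * (deriv (fun x : ℝ => u (z + (x : ℂ))) 0 -
    Complex.I * deriv (fun y : ℝ => u (z + (y : ℂ) * Complex.I)) 0)

/-- the Wirtinger derivative `∂/∂z̄`. -/
def wdzbar (u : ℂ → ℂ) (z : ℂ) : ℂ :=
  (1 / 2) * (deriv (fun x : ℝ => u (z + (x : ℂ))) 0 +
    Complex.I * deriv (fun y : ℝ => u (z + (y : ℂ) * Complex.I)) 0)

/-- harmonic functions on a planar set. -/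
def HarmOn (u : ℂ → ℝ) (s : Set ℂ) : Prop :=
  ContDiffOn ℝ 2 u s ∧ ∀ z ∈ s,
    iteratedDeriv 2 (fun x : ℝ => u (z + (x : ℂ))) 0 +
      iteratedDeriv 2 (fun y : ℝ => u (z + (y : ℂ) * Complex.I)) 0 = 0

/-- `F' = (1/2) ∂ω/∂z` for a real-valued function `ω`. -/
def Fp (ω : ℂ → ℝ) (z : ℂ) : ℂ := (1 / 2) * wdz (fun w => ((ω w : ℝ) : ℂ)) z

namespace SmoothDomain

variable {n : ℕ} (D : SmoothDomain n)

/-- the harmonic measure functions `ω j`: harmonic on `Ω`, continuous up to the boundary,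
equal to `1` on the boundary curve `γ j` and to `0` on the other boundary curves. -/
def IsHarmonicMeasures (ω : Fin n → ℂ → ℝ) : Prop :=
  ∀ j, ContinuousOn (ω j) (closure D.Ω) ∧ HarmOn (ω j) D.Ω ∧
    (∀ z ∈ Set.range (D.γ j), ω j z = 1) ∧
    ∀ i, i ≠ j → ∀ z ∈ Set.range (D.γ i), ω j z = 0

/-- `K` is the weighted Bergman kernel of `Ω` for the weight `φ`. -/
def IsBergman (φ : ℂ → ℝ) (K : ℂ → ℂ → ℂ) : Prop :=
  ∀ w ∈ D.Ω,
    (DifferentiableOn ℂ (fun z => K z w) D.Ω ∧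
      IntegrableOn (fun z => ‖K z w‖ ^ 2 * φ z) D.Ω volume) ∧
    ∀ f : ℂ → ℂ, DifferentiableOn ℂ f D.Ω →
      IntegrableOn (fun z => ‖f z‖ ^ 2 * φ z) D.Ω volume →
      f w = ∫ z in D.Ω, f z * (starRingEnd ℂ) (K z w) * (φ z : ℂ)

/-- `G` is the classical Green's function of `Ω`. -/
def IsGreen (G : ℂ → ℂ → ℝ) : Prop :=
  ∀ a ∈ D.Ω,
    ContinuousOn (fun z => G z a) (closure D.Ω \ {a}) ∧
    HarmOn (fun z => G z a) (D.Ω \ {a}) ∧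
    (∀ z ∈ frontier D.Ω, G z a = 0) ∧
    ∃ U : Set ℂ, IsOpen U ∧ a ∈ U ∧ ∃ u : ℂ → ℝ, HarmOn u U ∧
      ∀ z ∈ U \ {a}, G z a = -Real.log (dist z a) + u z

/-- meromorphic functions on `Ω`, continuous up to `∂Ω` away from the (finitely many)
poles, which extend meromorphically to the double `Ω̂` of `Ω`: there is a meromorphic
function `h` on `Ω` (continuous up to `∂Ω` off its poles) with `g = conj h` on `∂Ω`. -/
def DoubleMero (g : ℂ → ℂ) : Prop :=
  MeromorphicOn g D.Ω ∧
  (∃ P : Set ℂ, P ⊆ D.Ω ∧ P.Finite ∧ ContinuousOn g (closure D.Ω \ P)) ∧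
  ∃ h : ℂ → ℂ, MeromorphicOn h D.Ω ∧
    (∃ Q : Set ℂ, Q ⊆ D.Ω ∧ Q.Finite ∧ ContinuousOn h (closure D.Ω \ Q)) ∧
    ∀ z ∈ frontier D.Ω, g z = (starRingEnd ℂ) (h z)

/-- the generating set of the class `𝓐`: the functions `F_j'`; `G_z(·,a)`;
`∂ⁿ/∂aⁿ G_z(·,a)` and `∂ⁿ/∂āⁿ G_z(·,a)` for `a ∈ cl Ω`; and products of two Szegő
kernels `S(·,a₁)S(·,a₂)`.  The class `𝓐` is its complex linear span. -/
def classABase (S : ℂ → ℂ → ℂ) (G : ℂ → ℂ → ℝ) (ω : Fin n → ℂ → ℝ) : Set (ℂ → ℂ) :=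
  (Set.range fun j : Fin (n - 1) => Fp (ω (Fin.castLE (Nat.sub_le n 1) j))) ∪
  {g | ∃ a ∈ closure D.Ω, g = fun z => wdz (fun w => ((G w a : ℝ) : ℂ)) z} ∪
  {g | ∃ a ∈ closure D.Ω, ∃ m : ℕ, 1 ≤ m ∧
    g = fun z => (wdz^[m] fun w => wdz (fun ξ => ((G ξ w : ℝ) : ℂ)) z) a} ∪
  {g | ∃ a ∈ closure D.Ω, ∃ m : ℕ, 1 ≤ m ∧
    g = fun z => (wdzbar^[m] fun w => wdz (fun ξ => ((G ξ w : ℝ) : ℂ)) z) a} ∪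
  {g | ∃ a₁ ∈ D.Ω, ∃ a₂ ∈ D.Ω, g = fun z => S z a₁ * S z a₂}

/-- `Kt` is the reduced Bergman kernel `K̃_Ω(z,ζ) = ∂_z M(z,ζ,Ω)` of `Ω`. -/
def IsReducedBergman (Kt : ℂ → ℂ → ℂ) : Prop :=
  ∀ ζ ∈ D.Ω, ∃ M : ℂ → ℂ,
    DifferentiableOn ℂ M D.Ω ∧ M ζ = 0 ∧
    IntegrableOn (fun z => ‖deriv M z‖ ^ 2) D.Ω volume ∧
    (∀ z ∈ D.Ω, Kt z ζ = deriv M z) ∧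
    ∀ f : ℂ → ℂ, DifferentiableOn ℂ f D.Ω → f ζ = 0 →
      IntegrableOn (fun z => ‖deriv f z‖ ^ 2) D.Ω volume →
      deriv f ζ = ∫ z in D.Ω, deriv f z * (starRingEnd ℂ) (deriv M z)

/-- `Kt m` is the `m`-th order reduced Bergman kernel `K̃_{Ω,m}(z,ζ) = ∂_z M(z,ζ^m,Ω)`. -/
def IsHigherReducedBergman (Kt : ℕ → ℂ → ℂ → ℂ) : Prop :=
  ∀ m : ℕ, 1 ≤ m → ∀ ζ ∈ D.Ω, ∃ M : ℂ → ℂ,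
    DifferentiableOn ℂ M D.Ω ∧ (∀ j, j < m → iteratedDeriv j M ζ = 0) ∧
    IntegrableOn (fun z => ‖deriv M z‖ ^ 2) D.Ω volume ∧
    (∀ z ∈ D.Ω, Kt m z ζ = deriv M z) ∧
    ∀ f : ℂ → ℂ, DifferentiableOn ℂ f D.Ω → (∀ j, j < m → iteratedDeriv j f ζ = 0) →
      IntegrableOn (fun z => ‖deriv f z‖ ^ 2) D.Ω volume →
      iteratedDeriv m f ζ = ∫ z in D.Ω, deriv f z * (starRingEnd ℂ) (deriv M z)

end SmoothDomain

section Helpers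

open MeasureTheory Complex

namespace SmoothDomain

variable {n : ℕ} (D : SmoothDomain n)

lemma frontier_compact : IsCompact (frontier D.Ω) :=
  Metric.isCompact_of_isClosed_isBounded isClosed_frontier
    (D.bounded.closure.subset frontier_subset_closure)

lemma mu_ae_frontier : ∀ᵐ z ∂D.μ, z ∈ frontier D.Ω := by
  rw [ae_iff]
  have hmeas : MeasurableSet (frontier D.Ω)ᶜ := isClosed_frontier.measurableSet.compl
  have hset : {z : ℂ | ¬ z ∈ frontier D.Ω} = (frontier D.Ω)ᶜ := rfl
  rw [hset, D.μ_def, Measure.finset_sum_apply]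
  refine Finset.sum_eq_zero fun i _ => ?_
  rw [Measure.map_apply (D.γ_smooth i).continuous.measurable hmeas]
  have hpre : (D.γ i) ⁻¹' (frontier D.Ω)ᶜ = ∅ := by
    ext t
    simp only [Set.mem_preimage, Set.mem_compl_iff, Set.mem_empty_iff_false, iff_false, not_not]
    rw [D.γ_cover]
    exact Set.mem_iUnion.2 ⟨i, Set.mem_range_self t⟩
  rw [hpre]
  exact measure_empty

lemma mu_finite : IsFiniteMeasure D.μ := by
  constructor
  rw [D.μ_def, Measure.finset_sum_apply]
  refine ENNReal.sum_lt_top.2 fun i _ => ?_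
  rw [Measure.map_apply (D.γ_smooth i).continuous.measurable MeasurableSet.univ,
    Set.preimage_univ, withDensity_apply _ MeasurableSet.univ, Measure.restrict_univ]
  have hcont : Continuous (deriv (D.γ i)) :=
    (D.γ_smooth i).continuous_deriv (by exact_mod_cast le_top)
  obtain ⟨C, hC⟩ := isCompact_Icc.exists_bound_of_continuousOn
    (s := Set.Icc (0:ℝ) 1) hcont.continuousOn
  have hb : ∫⁻ t in Set.Ico (0:ℝ) 1, ENNReal.ofReal ‖deriv (D.γ i) t‖ ∂volume
      ≤ ∫⁻ _ in Set.Ico (0:ℝ) 1, ENNReal.ofReal C ∂volume := by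
    refine setLIntegral_mono measurable_const fun t ht => ?_
    exact ENNReal.ofReal_le_ofReal (hC t ⟨ht.1, ht.2.le⟩)
  refine lt_of_le_of_lt hb ?_
  rw [setLIntegral_const]
  exact ENNReal.mul_lt_top ENNReal.ofReal_lt_top (by simp [Real.volume_Ico])

lemma T_norm_one : ∀ z ∈ frontier D.Ω, ‖D.T z‖ = 1 := by
  intro z hz
  rw [D.γ_cover] at hz
  obtain ⟨i, hi⟩ := Set.mem_iUnion.1 hz
  obtain ⟨t, rfl⟩ := hi
  have hne : deriv (D.γ i) t ≠ 0 := D.γ_regular i t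
  have hpos : (0:ℝ) < ‖deriv (D.γ i) t‖ := norm_pos_iff.2 hne
  rw [D.T_def i t, norm_div, Complex.norm_real, Real.norm_eq_abs, abs_of_pos hpos, div_self hpos.ne']

lemma weight_bounds (w : ℂ → ℝ) (hw : D.SmoothWeight w) :
    ∃ c C : ℝ, 0 < c ∧ c ≤ C ∧ ∀ z ∈ frontier D.Ω, c ≤ w z ∧ w z ≤ C := by
  obtain ⟨hpos, Φ, hΦsm, hΦeq⟩ := hw
  rcases Set.eq_empty_or_nonempty (frontier D.Ω) with he | hne
  · exact ⟨1, 1, one_pos, le_refl 1, fun z hz => by simp [he] at hz⟩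
  · obtain ⟨z₀, hz₀, hmin⟩ := D.frontier_compact.exists_isMinOn hne hΦsm.continuous.continuousOn
    obtain ⟨z₁, hz₁, hmax⟩ := D.frontier_compact.exists_isMaxOn hne hΦsm.continuous.continuousOn
    refine ⟨w z₀, w z₁, hpos z₀ hz₀, ?_, fun z hz => ⟨?_, ?_⟩⟩
    · rw [hΦeq hz₀, hΦeq hz₁]; exact hmin hz₁
    · rw [hΦeq hz₀, hΦeq hz]; exact hmin hz
    · rw [hΦeq hz₁, hΦeq hz]; exact hmax hz

lemma weight_aesm_real (w : ℂ → ℝ) (hw : D.SmoothWeight w) :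
    AEStronglyMeasurable w D.μ := by
  obtain ⟨_, Φ, hΦsm, hΦeq⟩ := hw
  exact hΦsm.continuous.aestronglyMeasurable.congr
    ((D.mu_ae_frontier).mono fun z hz => (hΦeq hz).symm)

lemma weight_aesm (w : ℂ → ℝ) (hw : D.SmoothWeight w) :
    AEStronglyMeasurable (fun z => ((w z : ℝ) : ℂ)) D.μ :=
  Complex.continuous_ofReal.comp_aestronglyMeasurable (D.weight_aesm_real w hw)

lemma memL2_conj {v : ℂ → ℂ} (hv : MemLp v 2 D.μ) :
    MemLp (fun z => (starRingEnd ℂ) (v z)) 2 D.μ :=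
  hv.of_le (Complex.continuous_conj.comp_aestronglyMeasurable hv.1)
    (Filter.Eventually.of_forall fun z => by simp)

lemma integrable_mul_conj {u v : ℂ → ℂ} (hu : MemLp u 2 D.μ) (hv : MemLp v 2 D.μ) :
    Integrable (fun z => u z * (starRingEnd ℂ) (v z)) D.μ := by
  have h := (D.memL2_conj hv).smul (φ := u) hu
    (p := 2) (q := 2) (r := 1)
  rw [memLp_one_iff_integrable] at h
  simpa [smul_eq_mul, Pi.mul_def] using h

lemma integrable_norm_mul {u v : ℂ → ℂ} (hu : MemLp u 2 D.μ) (hv : MemLp v 2 D.μ) :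
    Integrable (fun z => ‖u z‖ * ‖v z‖) D.μ := by
  have h := (hv.norm).smul (φ := fun z => ‖u z‖) hu.norm
    (p := 2) (q := 2) (r := 1)
  rw [memLp_one_iff_integrable] at h
  simpa [smul_eq_mul, Pi.mul_def] using h

lemma integrable_sq_norm {u : ℂ → ℂ} (hu : MemLp u 2 D.μ) :
    Integrable (fun z => ‖u z‖ ^ 2) D.μ := by
  simpa [sq] using D.integrable_norm_mul hu hu

lemma integrable_ip {u v : ℂ → ℂ} (w : ℂ → ℝ) (hu : MemLp u 2 D.μ) (hv : MemLp v 2 D.μ)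
    (hw : D.SmoothWeight w) :
    Integrable (fun z => u z * (starRingEnd ℂ) (v z) * ((w z : ℝ) : ℂ)) D.μ := by
  obtain ⟨c, C, hc, hcC, hb⟩ := D.weight_bounds w hw
  have h := (D.integrable_mul_conj hu hv).bdd_mul (c := C)
    (D.weight_aesm w hw)
    ((D.mu_ae_frontier).mono fun z hz => by
      rw [Complex.norm_real]
      exact (abs_le.2 ⟨le_trans (by linarith [(hb z hz).1]) (hb z hz).1, (hb z hz).2⟩)
      )
  simpa [mul_comm, mul_assoc, mul_left_comm] using h

lemma integrable_sq_weight {u : ℂ → ℂ} (w : ℂ → ℝ) (hu : MemLp u 2 D.μ)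
    (hw : D.SmoothWeight w) :
    Integrable (fun z => ‖u z‖ ^ 2 * w z) D.μ := by
  obtain ⟨c, C, hc, hcC, hb⟩ := D.weight_bounds w hw
  have h := (D.integrable_sq_norm hu).bdd_mul (c := C) (D.weight_aesm_real w hw)
    ((D.mu_ae_frontier).mono fun z hz => by
      rw [Real.norm_eq_abs]
      exact abs_le.2 ⟨le_trans (by linarith [(hb z hz).1]) (hb z hz).1, (hb z hz).2⟩)
  simpa [mul_comm] using h

end SmoothDomain

/-- elementary Cauchy-Schwarz for integrals -/
lemma cs_core {α : Type*} {m : MeasurableSpace α} (μ : MeasureTheory.Measure α) (f g : α → ℝ)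
    (hf2 : MeasureTheory.Integrable (fun x => f x ^ 2) μ)
    (hg2 : MeasureTheory.Integrable (fun x => g x ^ 2) μ)
    (hfg : MeasureTheory.Integrable (fun x => f x * g x) μ) :
    (∫ x, f x * g x ∂μ) ^ 2 ≤ (∫ x, f x ^ 2 ∂μ) * (∫ x, g x ^ 2 ∂μ) := by
  set A := ∫ x, f x ^ 2 ∂μ with hA
  set B := ∫ x, g x ^ 2 ∂μ with hB
  set C := ∫ x, f x * g x ∂μ with hC
  have hA0 : 0 ≤ A := integral_nonneg fun x => sq_nonneg _
  have hB0 : 0 ≤ B := integral_nonneg fun x => sq_nonneg _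
  have key : ∀ t : ℝ, 0 ≤ A * t ^ 2 + 2 * C * t + B := by
    intro t
    have h0 : 0 ≤ ∫ x, (t * f x + g x) ^ 2 ∂μ := integral_nonneg fun x => sq_nonneg _
    have hexp : ∫ x, (t * f x + g x) ^ 2 ∂μ = A * t ^ 2 + 2 * C * t + B := by
      have hfun : (fun x => (t * f x + g x) ^ 2)
          = fun x => t ^ 2 * f x ^ 2 + (2 * t) * (f x * g x) + g x ^ 2 := by
        funext x; ring
      have i1 : MeasureTheory.Integrable (fun x => t ^ 2 * f x ^ 2) μ := hf2.const_mul _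
      have i2 : MeasureTheory.Integrable (fun x => 2 * t * (f x * g x)) μ := hfg.const_mul _
      have i12 : MeasureTheory.Integrable
          (fun x => t ^ 2 * f x ^ 2 + 2 * t * (f x * g x)) μ := i1.add i2
      rw [hfun, MeasureTheory.integral_add i12 hg2, MeasureTheory.integral_add i1 i2,
        integral_const_mul, integral_const_mul]
      ring
    linarith [hexp ▸ h0]
  rcases eq_or_lt_of_le hA0 with hA' | hA'
  · have hCzero : C = 0 := by
      by_contra hCne
      have h := key (-(B + 1) / (2 * C))
      rw [← hA'] at h
      have hc : 2 * C * (-(B + 1) / (2 * C)) = -(B + 1) := by field_simp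
      nlinarith [h, hc]
    rw [hCzero, ← hA']
    simp
  · have h := key (-(C / A))
    have hAne : A ≠ 0 := hA'.ne'
    have e : A * (-(C / A)) ^ 2 + 2 * C * (-(C / A)) + B = B - C ^ 2 / A := by
      field_simp; ring
    have h' : C ^ 2 / A ≤ B := by linarith [e ▸ h]
    have := (div_le_iff₀ hA').1 h'
    linarith

namespace SmoothDomain

variable {n : ℕ} (D : SmoothDomain n)

lemma repro {w : ℂ → ℝ} {Sw : ℂ → ℂ → ℂ} (hSw : D.IsSzegoKernel w Sw) {a : ℂ}
    (ha : a ∈ D.Ω) (h : ℂ → ℂ) (hh : D.Hardy h) :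
    h a = ∫ z, h z * (starRingEnd ℂ) (Sw z a) * ((w z : ℝ) : ℂ) ∂D.μ :=
  (hSw a ha).2 h hh

lemma ip_self_real (u : ℂ → ℂ) (w : ℂ → ℝ) :
    ∫ z, u z * (starRingEnd ℂ) (u z) * ((w z : ℝ) : ℂ) ∂D.μ
      = ((∫ z, ‖u z‖ ^ 2 * w z ∂D.μ : ℝ) : ℂ) := by
  have e : (fun z => u z * (starRingEnd ℂ) (u z) * ((w z : ℝ) : ℂ))
      = fun z => ((‖u z‖ ^ 2 * w z : ℝ) : ℂ) := by
    funext z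
    rw [Complex.mul_conj, Complex.normSq_eq_norm_sq]
    push_cast
    ring
  rw [e]
  exact integral_ofReal (𝕜 := ℂ)

lemma ip_sub (u1 u2 v : ℂ → ℂ) (w : ℂ → ℝ)
    (h1 : Integrable (fun z => u1 z * (starRingEnd ℂ) (v z) * ((w z : ℝ) : ℂ)) D.μ)
    (h2 : Integrable (fun z => u2 z * (starRingEnd ℂ) (v z) * ((w z : ℝ) : ℂ)) D.μ) :
    ∫ z, (u1 z - u2 z) * (starRingEnd ℂ) (v z) * ((w z : ℝ) : ℂ) ∂D.μ
      = (∫ z, u1 z * (starRingEnd ℂ) (v z) * ((w z : ℝ) : ℂ) ∂D.μ)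
        - ∫ z, u2 z * (starRingEnd ℂ) (v z) * ((w z : ℝ) : ℂ) ∂D.μ := by
  rw [← integral_sub h1 h2]
  congr 1
  funext z
  ring

lemma ip_sub_right (u v1 v2 : ℂ → ℂ) (w : ℂ → ℝ)
    (h1 : Integrable (fun z => u z * (starRingEnd ℂ) (v1 z) * ((w z : ℝ) : ℂ)) D.μ)
    (h2 : Integrable (fun z => u z * (starRingEnd ℂ) (v2 z) * ((w z : ℝ) : ℂ)) D.μ) :
    ∫ z, u z * (starRingEnd ℂ) (v1 z - v2 z) * ((w z : ℝ) : ℂ) ∂D.μ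
      = (∫ z, u z * (starRingEnd ℂ) (v1 z) * ((w z : ℝ) : ℂ) ∂D.μ)
        - ∫ z, u z * (starRingEnd ℂ) (v2 z) * ((w z : ℝ) : ℂ) ∂D.μ := by
  rw [← integral_sub h1 h2]
  congr 1
  funext z
  rw [map_sub]
  ring

end SmoothDomain

lemma cs_sqrt {α : Type*} {m : MeasurableSpace α} (μ : MeasureTheory.Measure α) (f g : α → ℝ)
    (hf0 : ∀ x, 0 ≤ f x) (hg0 : ∀ x, 0 ≤ g x)
    (hf2 : MeasureTheory.Integrable (fun x => f x ^ 2) μ)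
    (hg2 : MeasureTheory.Integrable (fun x => g x ^ 2) μ)
    (hfg : MeasureTheory.Integrable (fun x => f x * g x) μ) :
    ∫ x, f x * g x ∂μ ≤ Real.sqrt (∫ x, f x ^ 2 ∂μ) * Real.sqrt (∫ x, g x ^ 2 ∂μ) := by
  have h := cs_core μ f g hf2 hg2 hfg
  have h0 : 0 ≤ ∫ x, f x * g x ∂μ :=
    MeasureTheory.integral_nonneg fun x => mul_nonneg (hf0 x) (hg0 x)
  calc ∫ x, f x * g x ∂μ = Real.sqrt ((∫ x, f x * g x ∂μ) ^ 2) := (Real.sqrt_sq h0).symm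
    _ ≤ Real.sqrt ((∫ x, f x ^ 2 ∂μ) * (∫ x, g x ^ 2 ∂μ)) := Real.sqrt_le_sqrt h
    _ = _ := Real.sqrt_mul (MeasureTheory.integral_nonneg fun x => sq_nonneg _) _

end Helpers


set_option maxHeartbeats 2000000 in
/-- **Ramadanov-type theorem, uniform convergence of the weights.**
If `φ_k → φ` uniformly on `∂Ω`, then `S_{φ_k}(z,w) → S_φ(z,w)` locally uniformly
on `Ω × Ω`. -/
theorem weighted_szego_kernel_convergence_interior {n : ℕ} (D : SmoothDomain n)
    (φ : ℂ → ℝ) (hφ : D.SmoothWeight φ)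
    (φk : ℕ → ℂ → ℝ) (hφk : ∀ k, D.SmoothWeight (φk k))
    (hconv : TendstoUniformlyOn (fun k => φk k) φ atTop (frontier D.Ω))
    (Sk : ℕ → ℂ → ℂ → ℂ) (hSk : ∀ k, D.IsSzegoKernel (φk k) (Sk k))
    (S : ℂ → ℂ → ℂ) (hS : D.IsSzegoKernel φ S) :
    TendstoLocallyUniformlyOn (fun k (p : ℂ × ℂ) => Sk k p.1 p.2)
      (fun p => S p.1 p.2) atTop (D.Ω ×ˢ D.Ω) := by
  classical
  haveI := D.mu_finite
  obtain ⟨c₀, Cφ, hc₀, hc₀C, hφb⟩ := D.weight_bounds φ hφ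
  have hCφ : 0 < Cφ := lt_of_lt_of_le hc₀ hc₀C
  rw [tendstoLocallyUniformlyOn_iff_forall_isCompact (D.isOpen.prod D.isOpen)]
  intro K hKsub hKc
  rw [Metric.tendstoUniformlyOn_iff]
  intro ε hε
  set K₁ : Set ℂ := (Prod.fst '' K) ∪ (Prod.snd '' K) with hK₁def
  have hK₁c : IsCompact K₁ := (hKc.image continuous_fst).union (hKc.image continuous_snd)
  have hK₁Ω : K₁ ⊆ D.Ω := by
    rintro z (⟨p, hp, rfl⟩ | ⟨p, hp, rfl⟩)
    · exact (hKsub hp).1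
    · exact (hKsub hp).2
  obtain ⟨δ, hδ, hδsub⟩ := hK₁c.exists_thickening_subset_open D.isOpen hK₁Ω
  have hπ := Real.pi_pos
  have hdist : ∀ a ∈ K₁, ∀ ζ ∈ frontier D.Ω, δ ≤ ‖ζ - a‖ := by
    intro a ha ζ hζ
    by_contra hlt
    push_neg at hlt
    have hmem : ζ ∈ Metric.thickening δ K₁ :=
      Metric.mem_thickening_iff.2 ⟨a, ha, by rw [dist_eq_norm]; exact hlt⟩
    have hζΩ : ζ ∈ D.Ω := hδsub hmem
    rw [D.isOpen.frontier_eq] at hζ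
    exact hζ.2 hζΩ
  set μT : ℝ := (D.μ Set.univ).toReal with hμT
  have hμT0 : 0 ≤ μT := ENNReal.toReal_nonneg
  set M : ℝ := Real.sqrt μT / (2 * Real.pi * δ * c₀) with hM
  have hM0 : 0 ≤ M := by positivity
  have hone2 : ∫ z, ((1:ℝ)) ^ 2 ∂D.μ = μT := by simp [hμT, Measure.real]
  -- uniform bound for the square norm of S(·,a)
  have hQ : ∀ a ∈ K₁, Real.sqrt (∫ z, ‖S z a‖ ^ 2 ∂D.μ) ≤ M := by
    intro a ha
    have haΩ : a ∈ D.Ω := hK₁Ω ha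
    have hH : D.Hardy (fun z => S z a) := (hS a haΩ).1
    have hmem : MemLp (fun z => S z a) 2 D.μ := hH.1
    have hQa0 : (0:ℝ) ≤ ∫ z, ‖S z a‖ ^ 2 ∂D.μ := integral_nonneg fun z => sq_nonneg _
    have hsq : Real.sqrt (∫ z, ‖S z a‖ ^ 2 ∂D.μ) ^ 2 = ∫ z, ‖S z a‖ ^ 2 ∂D.μ :=
      Real.sq_sqrt hQa0
    have hrep : S a a = ∫ z, S z a * (starRingEnd ℂ) (S z a) * ((φ z : ℝ) : ℂ) ∂D.μ :=
      D.repro hS haΩ _ hH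
    have hreal : S a a = ((∫ z, ‖S z a‖ ^ 2 * φ z ∂D.μ : ℝ) : ℂ) := by
      rw [hrep]; exact D.ip_self_real _ _
    have hY0 : 0 ≤ ∫ z, ‖S z a‖ ^ 2 * φ z ∂D.μ :=
      integral_nonneg_of_ae ((D.mu_ae_frontier).mono fun z hz =>
        mul_nonneg (sq_nonneg _) (hc₀.le.trans (hφb z hz).1))
    have hlow : c₀ * (∫ z, ‖S z a‖ ^ 2 ∂D.μ) ≤ ∫ z, ‖S z a‖ ^ 2 * φ z ∂D.μ := by
      have hmono := integral_mono_of_nonneg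
        (f := fun z => c₀ * ‖S z a‖ ^ 2) (g := fun z => ‖S z a‖ ^ 2 * φ z)
        (Filter.Eventually.of_forall fun z => mul_nonneg hc₀.le (sq_nonneg _))
        (D.integrable_sq_weight φ hmem hφ)
        ((D.mu_ae_frontier).mono fun z hz => by
          show c₀ * ‖S z a‖ ^ 2 ≤ ‖S z a‖ ^ 2 * φ z
          have h1 := (hφb z hz).1
          nlinarith [sq_nonneg ‖S z a‖])
      rwa [integral_const_mul] at hmono
    have hL1 : ∫ z, ‖S z a‖ ∂D.μ
        ≤ Real.sqrt (∫ z, ‖S z a‖ ^ 2 ∂D.μ) * Real.sqrt μT := by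
      have h1 := cs_sqrt D.μ (fun z => ‖S z a‖) (fun _ => (1:ℝ))
        (fun z => norm_nonneg _) (fun _ => zero_le_one)
        (D.integrable_sq_norm hmem) (by simpa using integrable_const (1:ℝ))
        (by simpa using (hmem.integrable (by norm_num)).norm)
      have e1 : ∫ z, ‖S z a‖ * (1:ℝ) ∂D.μ = ∫ z, ‖S z a‖ ∂D.μ := by simp
      rw [e1, hone2] at h1
      exact h1
    have hcau : S a a = D.cauchy (fun z => S z a) a := hH.2.2.1 a haΩ
    have hconst : ‖((2:ℂ) * (Real.pi : ℂ) * Complex.I)⁻¹‖ = (2 * Real.pi)⁻¹ := by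
      rw [norm_inv, norm_mul, norm_mul, Complex.norm_I, mul_one, Complex.norm_real,
        Real.norm_eq_abs, abs_of_pos hπ]
      norm_num
    have hnorm1 : ‖S a a‖ ≤ (2 * Real.pi)⁻¹ * ∫ z, ‖S z a‖ * δ⁻¹ ∂D.μ := by
      rw [hcau]
      simp only [SmoothDomain.cauchy]
      rw [norm_mul, hconst]
      refine mul_le_mul_of_nonneg_left ?_ (by positivity)
      refine le_trans (norm_integral_le_integral_norm _) ?_
      refine integral_mono_of_nonneg (Filter.Eventually.of_forall fun z => norm_nonneg _)
        (((hmem.integrable (by norm_num)).norm).mul_const δ⁻¹) ?_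
      refine (D.mu_ae_frontier).mono fun ζ hζ => ?_
      show ‖S ζ a * D.T ζ / (ζ - a)‖ ≤ ‖S ζ a‖ * δ⁻¹
      rw [norm_div, norm_mul, D.T_norm_one ζ hζ, mul_one]
      have hge : δ ≤ ‖ζ - a‖ := hdist a ha ζ hζ
      calc ‖S ζ a‖ / ‖ζ - a‖ ≤ ‖S ζ a‖ / δ :=
            div_le_div_of_nonneg_left (norm_nonneg _) hδ hge
        _ = ‖S ζ a‖ * δ⁻¹ := div_eq_mul_inv _ _
    have hYnorm : ‖S a a‖ = ∫ z, ‖S z a‖ ^ 2 * φ z ∂D.μ := by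
      rw [hreal, Complex.norm_real, Real.norm_eq_abs, _root_.abs_of_nonneg hY0]
    have hδint : ∫ z, ‖S z a‖ * δ⁻¹ ∂D.μ = δ⁻¹ * ∫ z, ‖S z a‖ ∂D.μ := by
      rw [integral_mul_const]; ring
    have hkey : c₀ * (∫ z, ‖S z a‖ ^ 2 ∂D.μ)
        ≤ (2 * Real.pi)⁻¹ * (δ⁻¹ * (Real.sqrt (∫ z, ‖S z a‖ ^ 2 ∂D.μ) * Real.sqrt μT)) := by
      refine le_trans hlow ?_
      rw [← hYnorm]
      refine le_trans hnorm1 ?_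
      rw [hδint]
      have := mul_le_mul_of_nonneg_left hL1 (by positivity : (0:ℝ) ≤ δ⁻¹)
      refine mul_le_mul_of_nonneg_left ?_ (by positivity)
      exact this
    have hP : (0:ℝ) < 2 * Real.pi * δ := by positivity
    have hconv2 : (2 * Real.pi)⁻¹ * (δ⁻¹ * (Real.sqrt (∫ z, ‖S z a‖ ^ 2 ∂D.μ) * Real.sqrt μT))
        * (2 * Real.pi * δ) = Real.sqrt (∫ z, ‖S z a‖ ^ 2 ∂D.μ) * Real.sqrt μT := by
      field_simp
    have hkey2 : c₀ * (∫ z, ‖S z a‖ ^ 2 ∂D.μ) * (2 * Real.pi * δ)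
        ≤ Real.sqrt (∫ z, ‖S z a‖ ^ 2 ∂D.μ) * Real.sqrt μT := by
      have h2 := mul_le_mul_of_nonneg_right hkey hP.le
      rwa [hconv2] at h2
    rcases eq_or_lt_of_le (Real.sqrt_nonneg (∫ z, ‖S z a‖ ^ 2 ∂D.μ)) with h0 | hpos
    · rw [← h0]; exact hM0
    · rw [hM, le_div_iff₀ (by positivity)]
      have h7 : (c₀ * Real.sqrt (∫ z, ‖S z a‖ ^ 2 ∂D.μ) * (2 * Real.pi * δ))
          * Real.sqrt (∫ z, ‖S z a‖ ^ 2 ∂D.μ)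
          ≤ Real.sqrt μT * Real.sqrt (∫ z, ‖S z a‖ ^ 2 ∂D.μ) := by
        have e : (c₀ * Real.sqrt (∫ z, ‖S z a‖ ^ 2 ∂D.μ) * (2 * Real.pi * δ))
            * Real.sqrt (∫ z, ‖S z a‖ ^ 2 ∂D.μ)
            = c₀ * (∫ z, ‖S z a‖ ^ 2 ∂D.μ) * (2 * Real.pi * δ) := by
          conv_rhs => rw [← hsq]
          ring
        have e2 : Real.sqrt μT * Real.sqrt (∫ z, ‖S z a‖ ^ 2 ∂D.μ)
            = Real.sqrt (∫ z, ‖S z a‖ ^ 2 ∂D.μ) * Real.sqrt μT := by ring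
        rw [e, e2]
        exact hkey2
      have h6 := le_of_mul_le_mul_right h7 hpos
      have e3 : Real.sqrt (∫ z, ‖S z a‖ ^ 2 ∂D.μ) * (2 * Real.pi * δ * c₀)
          = c₀ * Real.sqrt (∫ z, ‖S z a‖ ^ 2 ∂D.μ) * (2 * Real.pi * δ) := by ring
      rw [e3]
      exact h6
  -- choose the closeness parameter
  have hden : (0:ℝ) < 2 * Cφ * M ^ 2 + c₀ := by nlinarith [sq_nonneg M, hCφ, hc₀]
  set ε' : ℝ := min (c₀ / 2) (ε * c₀ / (2 * Cφ * M ^ 2 + c₀)) with hε'def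
  have hε'pos : 0 < ε' := lt_min (by positivity) (div_pos (mul_pos hε hc₀) hden)
  have hε'half : ε' ≤ c₀ / 2 := min_le_left _ _
  have hε'key : ε' * (2 * Cφ * M ^ 2 + c₀) ≤ ε * c₀ := by
    have h := min_le_right (c₀ / 2) (ε * c₀ / (2 * Cφ * M ^ 2 + c₀))
    calc ε' * (2 * Cφ * M ^ 2 + c₀)
        ≤ ε * c₀ / (2 * Cφ * M ^ 2 + c₀) * (2 * Cφ * M ^ 2 + c₀) :=
          mul_le_mul_of_nonneg_right h hden.le
      _ = ε * c₀ := div_mul_cancel₀ _ hden.ne'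
  filter_upwards [Metric.tendstoUniformlyOn_iff.1 hconv ε' hε'pos] with k hk
  rintro ⟨a, b⟩ hp
  have ha : a ∈ K₁ := Or.inl ⟨(a, b), hp, rfl⟩
  have hb : b ∈ K₁ := Or.inr ⟨(a, b), hp, rfl⟩
  have haΩ : a ∈ D.Ω := hK₁Ω ha
  have hbΩ : b ∈ D.Ω := hK₁Ω hb
  have hεz : ∀ z ∈ frontier D.Ω, |φ z - φk k z| ≤ ε' := by
    intro z hz
    have := hk z hz
    rw [Real.dist_eq] at this
    exact this.le
  have hψlow : ∀ z ∈ frontier D.Ω, c₀ / 2 ≤ φk k z := by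
    intro z hz
    have h1 := hεz z hz
    have h2 := (hφb z hz).1
    have h3 := abs_le.1 h1
    linarith
  -- memberships
  have hHu' : D.Hardy (fun z => Sk k z b) := ((hSk k) b hbΩ).1
  have hHu : D.Hardy (fun z => S z b) := (hS b hbΩ).1
  have hHv' : D.Hardy (fun z => Sk k z a) := ((hSk k) a haΩ).1
  have hHv : D.Hardy (fun z => S z a) := (hS a haΩ).1
  have mu' : MemLp (fun z => Sk k z b) 2 D.μ := hHu'.1
  have mu : MemLp (fun z => S z b) 2 D.μ := hHu.1
  have mv' : MemLp (fun z => Sk k z a) 2 D.μ := hHv'.1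
  have mv : MemLp (fun z => S z a) 2 D.μ := hHv.1
  have md : MemLp (fun z => Sk k z b - S z b) 2 D.μ := mu'.sub mu
  -- abbreviations for the square norms
  have hX0 : (0:ℝ) ≤ ∫ z, ‖Sk k z b - S z b‖ ^ 2 ∂D.μ := integral_nonneg fun z => sq_nonneg _
  have hsN0 : 0 ≤ Real.sqrt (∫ z, ‖Sk k z b - S z b‖ ^ 2 ∂D.μ) := Real.sqrt_nonneg _
  have hsNsq : Real.sqrt (∫ z, ‖Sk k z b - S z b‖ ^ 2 ∂D.μ) ^ 2
      = ∫ z, ‖Sk k z b - S z b‖ ^ 2 ∂D.μ := Real.sq_sqrt hX0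
  have hsQa0 : 0 ≤ Real.sqrt (∫ z, ‖S z a‖ ^ 2 ∂D.μ) := Real.sqrt_nonneg _
  have hsQb0 : 0 ≤ Real.sqrt (∫ z, ‖S z b‖ ^ 2 ∂D.μ) := Real.sqrt_nonneg _
  -- reproducing identities
  have A3 : Sk k a b = ∫ z, Sk k z b * (starRingEnd ℂ) (S z a) * ((φ z : ℝ) : ℂ) ∂D.μ :=
    D.repro hS haΩ _ hHu'
  have A4 : S a b = ∫ z, S z b * (starRingEnd ℂ) (S z a) * ((φ z : ℝ) : ℂ) ∂D.μ :=
    D.repro hS haΩ _ hHu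
  have B1 : Sk k b b = ∫ z, Sk k z b * (starRingEnd ℂ) (Sk k z b) * ((φk k z : ℝ) : ℂ) ∂D.μ :=
    D.repro (hSk k) hbΩ _ hHu'
  have B2 : S b b = ∫ z, S z b * (starRingEnd ℂ) (Sk k z b) * ((φk k z : ℝ) : ℂ) ∂D.μ :=
    D.repro (hSk k) hbΩ _ hHu
  have B3 : Sk k b b = ∫ z, Sk k z b * (starRingEnd ℂ) (S z b) * ((φ z : ℝ) : ℂ) ∂D.μ :=
    D.repro hS hbΩ _ hHu'
  have B4 : S b b = ∫ z, S z b * (starRingEnd ℂ) (S z b) * ((φ z : ℝ) : ℂ) ∂D.μ :=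
    D.repro hS hbΩ _ hHu
  -- integrability of all products
  have idu'ψ : Integrable (fun z => (Sk k z b - S z b) * (starRingEnd ℂ) (Sk k z b)
      * ((φk k z : ℝ) : ℂ)) D.μ := D.integrable_ip (φk k) md mu' (hφk k)
  have iduψ : Integrable (fun z => (Sk k z b - S z b) * (starRingEnd ℂ) (S z b)
      * ((φk k z : ℝ) : ℂ)) D.μ := D.integrable_ip (φk k) md mu (hφk k)
  have iduφ : Integrable (fun z => (Sk k z b - S z b) * (starRingEnd ℂ) (S z b)
      * ((φ z : ℝ) : ℂ)) D.μ := D.integrable_ip φ md mu hφ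
  have idvφ : Integrable (fun z => (Sk k z b - S z b) * (starRingEnd ℂ) (S z a)
      * ((φ z : ℝ) : ℂ)) D.μ := D.integrable_ip φ md mv hφ
  -- the difference as a single integral against φ
  have hΔ : Sk k a b - S a b
      = ∫ z, (Sk k z b - S z b) * (starRingEnd ℂ) (S z a) * ((φ z : ℝ) : ℂ) ∂D.μ := by
    rw [D.ip_sub _ _ _ _ (D.integrable_ip φ mu' mv hφ) (D.integrable_ip φ mu mv hφ), ← A3, ← A4]
  -- key identity:  ∫ |d|² ψ  =  ∫ d conj(S·b) φ - ∫ d conj(S·b) ψ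
  have hWc : ((∫ z, ‖Sk k z b - S z b‖ ^ 2 * φk k z ∂D.μ : ℝ) : ℂ)
      = (∫ z, (Sk k z b - S z b) * (starRingEnd ℂ) (S z b) * ((φ z : ℝ) : ℂ) ∂D.μ)
        - ∫ z, (Sk k z b - S z b) * (starRingEnd ℂ) (S z b) * ((φk k z : ℝ) : ℂ) ∂D.μ := by
    rw [← D.ip_self_real (fun z => Sk k z b - S z b) (φk k)]
    have e1 : ∫ z, (Sk k z b - S z b) * (starRingEnd ℂ) (Sk k z b - S z b)
        * ((φk k z : ℝ) : ℂ) ∂D.μ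
        = (∫ z, (Sk k z b - S z b) * (starRingEnd ℂ) (Sk k z b) * ((φk k z : ℝ) : ℂ) ∂D.μ)
          - ∫ z, (Sk k z b - S z b) * (starRingEnd ℂ) (S z b) * ((φk k z : ℝ) : ℂ) ∂D.μ :=
      D.ip_sub_right _ _ _ _ idu'ψ iduψ
    have e2 : ∫ z, (Sk k z b - S z b) * (starRingEnd ℂ) (Sk k z b) * ((φk k z : ℝ) : ℂ) ∂D.μ
        = Sk k b b - S b b := by
      rw [D.ip_sub _ _ _ _ (D.integrable_ip (φk k) mu' mu' (hφk k))
        (D.integrable_ip (φk k) mu mu' (hφk k)), ← B1, ← B2]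
    have e3 : ∫ z, (Sk k z b - S z b) * (starRingEnd ℂ) (S z b) * ((φ z : ℝ) : ℂ) ∂D.μ
        = Sk k b b - S b b := by
      rw [D.ip_sub _ _ _ _ (D.integrable_ip φ mu' mu hφ) (D.integrable_ip φ mu mu hφ),
        ← B3, ← B4]
    rw [e1, e2, ← e3]
  -- lower bound on the weighted square integral
  have hW0 : 0 ≤ ∫ z, ‖Sk k z b - S z b‖ ^ 2 * φk k z ∂D.μ :=
    integral_nonneg_of_ae ((D.mu_ae_frontier).mono fun z hz =>
      mul_nonneg (sq_nonneg _) (le_trans (by positivity) (hψlow z hz)))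
  have hWlow : c₀ / 2 * (∫ z, ‖Sk k z b - S z b‖ ^ 2 ∂D.μ)
      ≤ ∫ z, ‖Sk k z b - S z b‖ ^ 2 * φk k z ∂D.μ := by
    have hmono := integral_mono_of_nonneg
      (f := fun z => c₀ / 2 * ‖Sk k z b - S z b‖ ^ 2)
      (g := fun z => ‖Sk k z b - S z b‖ ^ 2 * φk k z)
      (Filter.Eventually.of_forall fun z => mul_nonneg (by positivity) (sq_nonneg _))
      (D.integrable_sq_weight (φk k) md (hφk k))
      ((D.mu_ae_frontier).mono fun z hz => by
        show c₀ / 2 * ‖Sk k z b - S z b‖ ^ 2 ≤ ‖Sk k z b - S z b‖ ^ 2 * φk k z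
        have h1 := hψlow z hz
        nlinarith [sq_nonneg ‖Sk k z b - S z b‖])
    rwa [integral_const_mul] at hmono
  -- Cauchy-Schwarz bounds
  have hCS1 : ∫ z, ‖Sk k z b - S z b‖ * ‖S z b‖ ∂D.μ
      ≤ Real.sqrt (∫ z, ‖Sk k z b - S z b‖ ^ 2 ∂D.μ) * Real.sqrt (∫ z, ‖S z b‖ ^ 2 ∂D.μ) :=
    cs_sqrt D.μ _ _ (fun z => norm_nonneg _) (fun z => norm_nonneg _)
      (D.integrable_sq_norm md) (D.integrable_sq_norm mu) (D.integrable_norm_mul md mu)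
  have hCS2 : ∫ z, ‖Sk k z b - S z b‖ * ‖S z a‖ ∂D.μ
      ≤ Real.sqrt (∫ z, ‖Sk k z b - S z b‖ ^ 2 ∂D.μ) * Real.sqrt (∫ z, ‖S z a‖ ^ 2 ∂D.μ) :=
    cs_sqrt D.μ _ _ (fun z => norm_nonneg _) (fun z => norm_nonneg _)
      (D.integrable_sq_norm md) (D.integrable_sq_norm mv) (D.integrable_norm_mul md mv)
  -- norm bound on the weighted square integral
  have hWup : (∫ z, ‖Sk k z b - S z b‖ ^ 2 * φk k z ∂D.μ)
      ≤ ε' * (Real.sqrt (∫ z, ‖Sk k z b - S z b‖ ^ 2 ∂D.μ)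
        * Real.sqrt (∫ z, ‖S z b‖ ^ 2 ∂D.μ)) := by
    have h1 : (∫ z, ‖Sk k z b - S z b‖ ^ 2 * φk k z ∂D.μ)
        = ‖((∫ z, ‖Sk k z b - S z b‖ ^ 2 * φk k z ∂D.μ : ℝ) : ℂ)‖ := by
      rw [Complex.norm_real, Real.norm_eq_abs, _root_.abs_of_nonneg hW0]
    rw [h1, hWc, ← integral_sub iduφ iduψ]
    refine le_trans (norm_integral_le_integral_norm _) ?_
    have h2 : ∫ z, ‖(Sk k z b - S z b) * (starRingEnd ℂ) (S z b) * ((φ z : ℝ) : ℂ)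
        - (Sk k z b - S z b) * (starRingEnd ℂ) (S z b) * ((φk k z : ℝ) : ℂ)‖ ∂D.μ
        ≤ ∫ z, ε' * (‖Sk k z b - S z b‖ * ‖S z b‖) ∂D.μ := by
      refine integral_mono_of_nonneg (Filter.Eventually.of_forall fun z => norm_nonneg _)
        ((D.integrable_norm_mul md mu).const_mul ε') ?_
      refine (D.mu_ae_frontier).mono fun z hz => ?_
      show ‖(Sk k z b - S z b) * (starRingEnd ℂ) (S z b) * ((φ z : ℝ) : ℂ)
          - (Sk k z b - S z b) * (starRingEnd ℂ) (S z b) * ((φk k z : ℝ) : ℂ)‖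
          ≤ ε' * (‖Sk k z b - S z b‖ * ‖S z b‖)
      have e : (Sk k z b - S z b) * (starRingEnd ℂ) (S z b) * ((φ z : ℝ) : ℂ)
          - (Sk k z b - S z b) * (starRingEnd ℂ) (S z b) * ((φk k z : ℝ) : ℂ)
          = (Sk k z b - S z b) * (starRingEnd ℂ) (S z b) * ((φ z - φk k z : ℝ) : ℂ) := by
        push_cast
        ring
      rw [e, norm_mul, norm_mul, Complex.norm_real, Real.norm_eq_abs, RingHomIsometric.norm_map]
      calc ‖Sk k z b - S z b‖ * ‖S z b‖ * |φ z - φk k z|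
          ≤ ‖Sk k z b - S z b‖ * ‖S z b‖ * ε' := by
            refine mul_le_mul_of_nonneg_left (hεz z hz) ?_
            positivity
        _ = ε' * (‖Sk k z b - S z b‖ * ‖S z b‖) := by ring
    refine le_trans h2 ?_
    rw [integral_const_mul]
    exact mul_le_mul_of_nonneg_left hCS1 hε'pos.le
  -- L² bound for the defect
  have hNbound : c₀ * Real.sqrt (∫ z, ‖Sk k z b - S z b‖ ^ 2 ∂D.μ)
      ≤ 2 * ε' * Real.sqrt (∫ z, ‖S z b‖ ^ 2 ∂D.μ) := by
    rcases eq_or_lt_of_le hsN0 with h0 | hpos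
    · rw [← h0, mul_zero]
      exact mul_nonneg (mul_nonneg (by norm_num) hε'pos.le) (Real.sqrt_nonneg _)
    · have h1 : c₀ / 2 * Real.sqrt (∫ z, ‖Sk k z b - S z b‖ ^ 2 ∂D.μ) ^ 2
          ≤ ε' * (Real.sqrt (∫ z, ‖Sk k z b - S z b‖ ^ 2 ∂D.μ)
            * Real.sqrt (∫ z, ‖S z b‖ ^ 2 ∂D.μ)) := by
        rw [hsNsq]
        linarith [hWlow, hWup]
      have h2 : (c₀ / 2 * Real.sqrt (∫ z, ‖Sk k z b - S z b‖ ^ 2 ∂D.μ))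
          * Real.sqrt (∫ z, ‖Sk k z b - S z b‖ ^ 2 ∂D.μ)
          ≤ (ε' * Real.sqrt (∫ z, ‖S z b‖ ^ 2 ∂D.μ))
            * Real.sqrt (∫ z, ‖Sk k z b - S z b‖ ^ 2 ∂D.μ) := by
        have e : (c₀ / 2 * Real.sqrt (∫ z, ‖Sk k z b - S z b‖ ^ 2 ∂D.μ))
            * Real.sqrt (∫ z, ‖Sk k z b - S z b‖ ^ 2 ∂D.μ)
            = c₀ / 2 * Real.sqrt (∫ z, ‖Sk k z b - S z b‖ ^ 2 ∂D.μ) ^ 2 := by ring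
        have e2 : (ε' * Real.sqrt (∫ z, ‖S z b‖ ^ 2 ∂D.μ))
            * Real.sqrt (∫ z, ‖Sk k z b - S z b‖ ^ 2 ∂D.μ)
            = ε' * (Real.sqrt (∫ z, ‖Sk k z b - S z b‖ ^ 2 ∂D.μ)
              * Real.sqrt (∫ z, ‖S z b‖ ^ 2 ∂D.μ)) := by ring
        rw [e, e2]
        exact h1
      have h3 := le_of_mul_le_mul_right h2 hpos
      linarith
  -- final norm bound
  have hfin : ‖Sk k a b - S a b‖
      ≤ Cφ * (Real.sqrt (∫ z, ‖Sk k z b - S z b‖ ^ 2 ∂D.μ)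
        * Real.sqrt (∫ z, ‖S z a‖ ^ 2 ∂D.μ)) := by
    rw [hΔ]
    refine le_trans (norm_integral_le_integral_norm _) ?_
    have h2 : ∫ z, ‖(Sk k z b - S z b) * (starRingEnd ℂ) (S z a) * ((φ z : ℝ) : ℂ)‖ ∂D.μ
        ≤ ∫ z, Cφ * (‖Sk k z b - S z b‖ * ‖S z a‖) ∂D.μ := by
      refine integral_mono_of_nonneg (Filter.Eventually.of_forall fun z => norm_nonneg _)
        ((D.integrable_norm_mul md mv).const_mul Cφ) ?_
      refine (D.mu_ae_frontier).mono fun z hz => ?_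
      show ‖(Sk k z b - S z b) * (starRingEnd ℂ) (S z a) * ((φ z : ℝ) : ℂ)‖
          ≤ Cφ * (‖Sk k z b - S z b‖ * ‖S z a‖)
      rw [norm_mul, norm_mul, Complex.norm_real, Real.norm_eq_abs, RingHomIsometric.norm_map]
      have hb1 := (hφb z hz).1
      have hb2 := (hφb z hz).2
      have : |φ z| ≤ Cφ := abs_le.2 ⟨by linarith, hb2⟩
      calc ‖Sk k z b - S z b‖ * ‖S z a‖ * |φ z|
          ≤ ‖Sk k z b - S z b‖ * ‖S z a‖ * Cφ := by
            refine mul_le_mul_of_nonneg_left this ?_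
            positivity
        _ = Cφ * (‖Sk k z b - S z b‖ * ‖S z a‖) := by ring
    refine le_trans h2 ?_
    rw [integral_const_mul]
    exact mul_le_mul_of_nonneg_left hCS2 hCφ.le
  -- assemble
  have hQa := hQ a ha
  have hQb := hQ b hb
  rw [dist_eq_norm, norm_sub_rev]
  have e1 : c₀ * ‖Sk k a b - S a b‖
      ≤ Cφ * ((2 * ε' * M) * M) := by
    have t1 : c₀ * (Real.sqrt (∫ z, ‖Sk k z b - S z b‖ ^ 2 ∂D.μ)
        * Real.sqrt (∫ z, ‖S z a‖ ^ 2 ∂D.μ))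
        ≤ (2 * ε' * Real.sqrt (∫ z, ‖S z b‖ ^ 2 ∂D.μ)) * Real.sqrt (∫ z, ‖S z a‖ ^ 2 ∂D.μ) := by
      have := mul_le_mul_of_nonneg_right hNbound hsQa0
      calc c₀ * (Real.sqrt (∫ z, ‖Sk k z b - S z b‖ ^ 2 ∂D.μ)
          * Real.sqrt (∫ z, ‖S z a‖ ^ 2 ∂D.μ))
          = c₀ * Real.sqrt (∫ z, ‖Sk k z b - S z b‖ ^ 2 ∂D.μ)
            * Real.sqrt (∫ z, ‖S z a‖ ^ 2 ∂D.μ) := by ring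
        _ ≤ _ := this
    have t2 : (2 * ε' * Real.sqrt (∫ z, ‖S z b‖ ^ 2 ∂D.μ))
        * Real.sqrt (∫ z, ‖S z a‖ ^ 2 ∂D.μ) ≤ (2 * ε' * M) * M := by
      refine mul_le_mul ?_ hQa hsQa0
        (mul_nonneg (mul_nonneg (by norm_num) hε'pos.le) hM0)
      exact mul_le_mul_of_nonneg_left hQb (mul_nonneg (by norm_num) hε'pos.le)
    calc c₀ * ‖Sk k a b - S a b‖
        ≤ c₀ * (Cφ * (Real.sqrt (∫ z, ‖Sk k z b - S z b‖ ^ 2 ∂D.μ)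
          * Real.sqrt (∫ z, ‖S z a‖ ^ 2 ∂D.μ))) := mul_le_mul_of_nonneg_left hfin hc₀.le
      _ = Cφ * (c₀ * (Real.sqrt (∫ z, ‖Sk k z b - S z b‖ ^ 2 ∂D.μ)
          * Real.sqrt (∫ z, ‖S z a‖ ^ 2 ∂D.μ))) := by ring
      _ ≤ Cφ * ((2 * ε' * Real.sqrt (∫ z, ‖S z b‖ ^ 2 ∂D.μ))
          * Real.sqrt (∫ z, ‖S z a‖ ^ 2 ∂D.μ)) := mul_le_mul_of_nonneg_left t1 hCφ.le
      _ ≤ Cφ * ((2 * ε' * M) * M) := mul_le_mul_of_nonneg_left t2 hCφ.le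
  have e2 : Cφ * ((2 * ε' * M) * M) = ε' * (2 * Cφ * M ^ 2) := by ring
  have hlast : c₀ * ‖Sk k a b - S a b‖ < c₀ * ε := by
    rw [e2] at e1
    have h2 : 0 < ε' * c₀ := mul_pos hε'pos hc₀
    nlinarith [hε'key, e1]
  exact lt_of_mul_lt_mul_left hlast hc₀.le
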